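/- Let G be a compact topological group with normalized Haar measure, and suppose G has an open normal subgroup T of index i such that for an element x ∈ G the image of ⟨x⟩ in G/C_G(T) has finite order j. Then Pr(⟨x⟩, G) ≥ 1/(ij), where Pr(H, G) is the probability that a random element of H commutes with a random element of G. -/

import Mathlib

open MeasureTheory Pointwise

/-- `commProbC μG H μH` is the probability that a random element of the subgroup `H`
(with measure `μH`) commutes with a random element of `G` (with measure `μG`). -/
noncomputable def commProbC {G : Type*} [Group G] [TopologicalSpace G] [MeasurableSpace G]
    (μG : Measure G) (H : Subgroup G) (μH : Measure ↥H) : ENNReal :=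
  (μH.prod μG) {p : ↥H × G | Commute (p.1 : G) p.2}

/-- A measurable subgroup of finite index `n > 0` has measure `1 / n` with respect to
a left-invariant probability measure. -/
lemma measure_subgroup_of_index {G : Type*} [Group G] [MeasurableSpace G] [MeasurableMul G]
    (μ : Measure G) [IsProbabilityMeasure μ] [μ.IsMulLeftInvariant]
    (S : Subgroup G) (hS : MeasurableSet (S : Set G)) (n : ℕ) (hn : S.index = n)
    (hn0 : 0 < n) : μ (S : Set G) = 1 / n := by
  have hcard : Nat.card (G ⧸ S) = n := by rw [← Subgroup.index_eq_card, hn]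
  have hfin : Finite (G ⧸ S) := Nat.finite_of_card_ne_zero (by omega)
  have hfintype : Fintype (G ⧸ S) := Fintype.ofFinite _
  -- the cosets `q.out' • S` cover `G`
  have key : ∀ q : G ⧸ S, ((Quotient.out q) • (S : Set G)) = QuotientGroup.mk ⁻¹' {q} := by
    intro q
    ext g
    simp only [Set.mem_smul_set_iff_inv_smul_mem, smul_eq_mul, SetLike.mem_coe,
      Set.mem_preimage, Set.mem_singleton_iff]
    constructor
    · intro h
      rw [← QuotientGroup.out_eq' q, eq_comm, QuotientGroup.eq]
      exact h
    · intro h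
      rw [← QuotientGroup.out_eq' q, eq_comm, QuotientGroup.eq] at h
      exact h
  have hmeas : ∀ q : G ⧸ S, MeasurableSet ((Quotient.out q) • (S : Set G)) := by
    intro q
    have : (Quotient.out q) • (S : Set G) = (fun h => (Quotient.out q)⁻¹ * h) ⁻¹' S := by
      ext g
      simp [Set.mem_smul_set_iff_inv_smul_mem, smul_eq_mul]
    rw [this]
    exact (measurable_const_mul _) hS
  have hdisj : Pairwise (Function.onFun Disjoint
      fun q : G ⧸ S => (Quotient.out q) • (S : Set G)) := by
    intro q q' hqq'
    simp only [Function.onFun, key]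
    exact Set.disjoint_left.mpr fun g hg hg' => hqq' (hg.symm.trans hg')
  have hunion : (⋃ q : G ⧸ S, (Quotient.out q) • (S : Set G)) = Set.univ := by
    ext g
    simp only [Set.mem_iUnion, key, Set.mem_preimage, Set.mem_singleton_iff, Set.mem_univ,
      iff_true]
    exact ⟨QuotientGroup.mk g, rfl⟩
  have hsm : ∀ q : G ⧸ S, μ ((Quotient.out q) • (S : Set G)) = μ (S : Set G) := by
    intro q
    have : (Quotient.out q) • (S : Set G) = (fun h => (Quotient.out q)⁻¹ * h) ⁻¹' S := by
      ext g
      simp [Set.mem_smul_set_iff_inv_smul_mem, smul_eq_mul]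
    rw [this, measure_preimage_mul]
  have h1 : (1 : ENNReal) = (n : ENNReal) * μ (S : Set G) := by
    have := measure_iUnion (μ := μ) hdisj hmeas
    rw [hunion, measure_univ] at this
    rw [this]
    simp_rw [hsm]
    rw [tsum_fintype]
    simp [Finset.sum_const, ← hcard, Nat.card_eq_fintype_card, nsmul_eq_mul]
  rw [ENNReal.eq_div_iff (by exact_mod_cast hn0.ne') (by simp)]
  exact h1.symm

theorem stmt7 {G : Type*} [Group G] [TopologicalSpace G] [IsTopologicalGroup G]
    [CompactSpace G] [T2Space G] [MeasurableSpace G] [BorelSpace G]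
    (μG : Measure G) (hμG : μG.IsHaarMeasure) (hμG1 : IsProbabilityMeasure μG)
    (T : Subgroup G) (hT : IsOpen (T : Set G)) [T.Normal]
    (i : ℕ) (hi : T.index = i) (hipos : 0 < i)
    (x : G) (j : ℕ) (hjpos : 0 < j)
    (hj : (Subgroup.centralizer (T : Set G)).relIndex
        ((Subgroup.closure {x}).topologicalClosure) = j)
    (μH : Measure ↥((Subgroup.closure {x}).topologicalClosure))
    (hμH : μH.IsHaarMeasure) (hμH1 : IsProbabilityMeasure μH) :
    1 / ((i : ENNReal) * j) ≤ commProbC μG (Subgroup.closure {x}).topologicalClosure μH := by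
  haveI := hμG.toIsMulLeftInvariant
  haveI := hμH.toIsMulLeftInvariant
  haveI : BorelSpace ↥((Subgroup.closure {x}).topologicalClosure) :=
    Subtype.borelSpace _
  -- the centralizer is closed, hence measurable
  have hCclosed : IsClosed ((Subgroup.centralizer (T : Set G)) : Set G) := by
    have : ((Subgroup.centralizer (T : Set G)) : Set G)
        = ⋂ t ∈ (T : Set G), {g : G | t * g = g * t} := by
      ext g
      simp [Subgroup.mem_centralizer_iff]
    rw [this]
    exact isClosed_biInter fun t _ => isClosed_eq (continuous_mul_left t)
      (continuous_mul_right t)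
  have hKmeas : MeasurableSet
      (((Subgroup.centralizer (T : Set G)).subgroupOf
        ((Subgroup.closure {x}).topologicalClosure) :
        Set ↥((Subgroup.closure {x}).topologicalClosure))) := by
    have : (((Subgroup.centralizer (T : Set G)).subgroupOf
        ((Subgroup.closure {x}).topologicalClosure) :
        Set ↥((Subgroup.closure {x}).topologicalClosure)))
        = Subtype.val ⁻¹' ((Subgroup.centralizer (T : Set G)) : Set G) := by
      ext h
      simp [Subgroup.mem_subgroupOf]
    rw [this]
    exact measurable_subtype_coe hCclosed.measurableSet
  have hμT : μG (T : Set G) = 1 / i :=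
    measure_subgroup_of_index μG T hT.measurableSet i hi hipos
  have hμK : μH (((Subgroup.centralizer (T : Set G)).subgroupOf
      ((Subgroup.closure {x}).topologicalClosure) :
      Set ↥((Subgroup.closure {x}).topologicalClosure))) = 1 / j :=
    measure_subgroup_of_index μH _ hKmeas j hj hjpos
  have hsub : (((Subgroup.centralizer (T : Set G)).subgroupOf
      ((Subgroup.closure {x}).topologicalClosure) :
      Set ↥((Subgroup.closure {x}).topologicalClosure))) ×ˢ (T : Set G)
      ⊆ {p : ↥((Subgroup.closure {x}).topologicalClosure) × G | Commute (p.1 : G) p.2} := by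
    rintro ⟨h, g⟩ ⟨hh, hg⟩
    have hh' : (h : G) ∈ Subgroup.centralizer (T : Set G) :=
      (Subgroup.mem_subgroupOf).mp hh
    have := Subgroup.mem_centralizer_iff.mp hh' g hg
    exact this.symm
  calc 1 / ((i : ENNReal) * j)
      = μH (((Subgroup.centralizer (T : Set G)).subgroupOf
          ((Subgroup.closure {x}).topologicalClosure) :
          Set ↥((Subgroup.closure {x}).topologicalClosure))) * μG (T : Set G) := by
        rw [hμK, hμT, one_div, one_div, one_div, ← ENNReal.mul_inv (by simp) (by simp),
          mul_comm (j : ENNReal) (i : ENNReal)]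
    _ = (μH.prod μG) (_ ×ˢ (T : Set G)) := (Measure.prod_prod _ _).symm
    _ ≤ commProbC μG (Subgroup.closure {x}).topologicalClosure μH := measure_mono hsub
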